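/- arXiv:2507.16689 — 4 statements merged into one kernel-verified Lean document; each statement's English description precedes it below -/
import Mathlib

section
/- Let η₁₁, η₁₂, η₂₁, η₂₂ be real numbers and let D₁₁, D₁₂, D₂₁, D₂₂ be mutually independent random variables on a probability space, each taking values in {0,1}, with P(D_{rs} = 1) = Λ(η_{rs}) for r,s ∈ {1,2}. Define Z = ((D₁₁ − D₁₂) − (D₂₁ − D₂₂))/2. Then the event {Z ∈ {−1, +1}} has positive probability, and the conditional probability P(Z = 1 | Z ∈ {−1, +1}) = Λ(η₁₁ + η₂₂ − η₁₂ − η₂₁). -/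
open MeasureTheory ProbabilityTheory

/-- The standard logistic CDF `Λ(z) = e^z / (1 + e^z)`. -/
noncomputable def logistic (z : ℝ) : ℝ := Real.exp z / (1 + Real.exp z)


lemma aux_ratio (u v w t : ℝ) (hu : 0 < u) (hv : 0 < v) (hw : 0 < w) (ht : 0 < t) :
    (u/(1+u) * (1/(1+v) * (1/(1+w) * (t/(1+t)))) + 1/(1+u) * (v/(1+v) * (w/(1+w) * (1/(1+t)))))⁻¹
      * (u/(1+u) * (1/(1+v) * (1/(1+w) * (t/(1+t)))))
      = (u*t/(v*w)) / (1 + u*t/(v*w)) := by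
  have h1 : (0:ℝ) < 1 + u := by linarith
  have h2 : (0:ℝ) < 1 + v := by linarith
  have h3 : (0:ℝ) < 1 + w := by linarith
  have h4 : (0:ℝ) < 1 + t := by linarith
  have hPi : (0:ℝ) < (1+u)*(1+v)*(1+w)*(1+t) := by positivity
  have hx : u/(1+u) * (1/(1+v) * (1/(1+w) * (t/(1+t)))) = u*t/((1+u)*(1+v)*(1+w)*(1+t)) := by
    field_simp
  have hy : 1/(1+u) * (v/(1+v) * (w/(1+w) * (1/(1+t)))) = v*w/((1+u)*(1+v)*(1+w)*(1+t)) := by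
    field_simp
  rw [hx, hy, ← add_div, inv_mul_eq_div]
  have h5 : (0:ℝ) < u*t + v*w := by positivity
  have h6 : (0:ℝ) < v*w := by positivity
  rw [div_eq_div_iff (by positivity) (by positivity)]
  field_simp
  ring

lemma logistic_pos (z : ℝ) : 0 < logistic z := by
  unfold logistic; positivity

lemma logistic_lt_one (z : ℝ) : logistic z < 1 := by
  unfold logistic
  rw [div_lt_one (by positivity)]
  linarith [Real.exp_pos z]

lemma one_sub_logistic (z : ℝ) : 1 - logistic z = 1 / (1 + Real.exp z) := by
  unfold logistic
  have : (0:ℝ) < 1 + Real.exp z := by positivity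
  field_simp
  ring

theorem tetrad_conditional_prob
    {Ω : Type*} [MeasurableSpace Ω] (P : Measure Ω) [IsProbabilityMeasure P]
    (η : Fin 2 → Fin 2 → ℝ) (D : Fin 2 → Fin 2 → Ω → ℝ)
    (hmeas : ∀ r s, Measurable (D r s))
    (hval : ∀ r s ω, D r s ω = 0 ∨ D r s ω = 1)
    (hindep : iIndepFun
      (fun p : Fin 2 × Fin 2 => D p.1 p.2) P)
    (hprob : ∀ r s, P {ω | D r s ω = 1} = ENNReal.ofReal (logistic (η r s)))
    (Z : Ω → ℝ)
    (hZ : ∀ ω, Z ω = ((D 0 0 ω - D 0 1 ω) - (D 1 0 ω - D 1 1 ω)) / 2) :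
    0 < P {ω | Z ω = 1 ∨ Z ω = -1} ∧
      P[|{ω | Z ω = 1 ∨ Z ω = -1}] {ω | Z ω = 1}
        = ENNReal.ofReal (logistic (η 0 0 + η 1 1 - η 0 1 - η 1 0)) := by
  -- event descriptions
  have hE1 : {ω | Z ω = 1} =
      (D 0 0 ⁻¹' {1}) ∩ ((D 0 1 ⁻¹' {0}) ∩ ((D 1 0 ⁻¹' {0}) ∩ (D 1 1 ⁻¹' {1}))) := by
    ext ω
    simp only [Set.mem_setOf_eq, Set.mem_inter_iff, Set.mem_preimage,
      Set.mem_singleton_iff, hZ]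
    rcases hval 0 0 ω with h1|h1 <;> rcases hval 0 1 ω with h2|h2 <;>
      rcases hval 1 0 ω with h3|h3 <;> rcases hval 1 1 ω with h4|h4 <;>
      rw [h1, h2, h3, h4] <;> norm_num
  have hE2 : {ω | Z ω = -1} =
      (D 0 0 ⁻¹' {0}) ∩ ((D 0 1 ⁻¹' {1}) ∩ ((D 1 0 ⁻¹' {1}) ∩ (D 1 1 ⁻¹' {0}))) := by
    ext ω
    simp only [Set.mem_setOf_eq, Set.mem_inter_iff, Set.mem_preimage,
      Set.mem_singleton_iff, hZ]
    rcases hval 0 0 ω with h1|h1 <;> rcases hval 0 1 ω with h2|h2 <;>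
      rcases hval 1 0 ω with h3|h3 <;> rcases hval 1 1 ω with h4|h4 <;>
      rw [h1, h2, h3, h4] <;> norm_num
  -- the independence product formula
  have key : ∀ v : Fin 2 → Fin 2 → ℝ,
      P ((D 0 0 ⁻¹' {v 0 0}) ∩ ((D 0 1 ⁻¹' {v 0 1}) ∩ ((D 1 0 ⁻¹' {v 1 0}) ∩ (D 1 1 ⁻¹' {v 1 1}))))
        = P (D 0 0 ⁻¹' {v 0 0}) * (P (D 0 1 ⁻¹' {v 0 1}) *
            (P (D 1 0 ⁻¹' {v 1 0}) * P (D 1 1 ⁻¹' {v 1 1}))) := by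
    intro v
    have h := hindep.measure_inter_preimage_eq_mul Finset.univ
      (sets := fun p => {v p.1 p.2}) (fun i _ => measurableSet_singleton _)
    have hset : (⋂ p ∈ Finset.univ, (fun p : Fin 2 × Fin 2 => D p.1 p.2) p ⁻¹' {v p.1 p.2})
        = (D 0 0 ⁻¹' {v 0 0}) ∩ ((D 0 1 ⁻¹' {v 0 1}) ∩ ((D 1 0 ⁻¹' {v 1 0}) ∩ (D 1 1 ⁻¹' {v 1 1}))) := by
      ext ω
      simp only [Set.mem_iInter, Finset.mem_univ, forall_true_left, Set.mem_inter_iff,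
        Set.mem_preimage, Set.mem_singleton_iff, true_implies]
      constructor
      · intro h
        exact ⟨h (0,0), h (0,1), h (1,0), h (1,1)⟩
      · rintro ⟨h1, h2, h3, h4⟩ ⟨r, s⟩
        fin_cases r <;> fin_cases s <;> assumption
    rw [hset] at h
    rw [h, Fintype.prod_prod_type]
    simp [Fin.prod_univ_two]
    ring
  have key' : ∀ a b c d : ℝ,
      P ((D 0 0 ⁻¹' {a}) ∩ ((D 0 1 ⁻¹' {b}) ∩ ((D 1 0 ⁻¹' {c}) ∩ (D 1 1 ⁻¹' {d}))))
        = P (D 0 0 ⁻¹' {a}) * (P (D 0 1 ⁻¹' {b}) * (P (D 1 0 ⁻¹' {c}) * P (D 1 1 ⁻¹' {d}))) := by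
    intro a b c d
    simpa using key ![![a, b], ![c, d]]
  -- probabilities of the singleton preimages
  have hprob1 : ∀ r s, P (D r s ⁻¹' {1}) = ENNReal.ofReal (logistic (η r s)) := by
    intro r s
    exact hprob r s
  have hprob0 : ∀ r s, P (D r s ⁻¹' {0}) = ENNReal.ofReal (1 - logistic (η r s)) := by
    intro r s
    have h01 : (D r s ⁻¹' ({0} : Set ℝ)) = (D r s ⁻¹' ({1} : Set ℝ))ᶜ := by
      ext ω
      simp only [Set.mem_preimage, Set.mem_singleton_iff, Set.mem_compl_iff]
      rcases hval r s ω with h|h <;> simp [h]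
    rw [h01, measure_compl (hmeas r s (measurableSet_singleton _)) (measure_ne_top _ _),
      measure_univ, hprob1 r s,
      ENNReal.ofReal_sub _ (le_of_lt (logistic_pos _)), ENNReal.ofReal_one]
  -- values
  set x : ℝ := logistic (η 0 0) * ((1 - logistic (η 0 1)) * ((1 - logistic (η 1 0)) * logistic (η 1 1))) with hxdef
  set y : ℝ := (1 - logistic (η 0 0)) * (logistic (η 0 1) * (logistic (η 1 0) * (1 - logistic (η 1 1)))) with hydef
  have hxpos : 0 < x := by
    rw [hxdef]
    exact mul_pos (logistic_pos _) (mul_pos (by linarith [logistic_lt_one (η 0 1)])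
      (mul_pos (by linarith [logistic_lt_one (η 1 0)]) (logistic_pos _)))
  have hypos : 0 < y := by
    rw [hydef]
    exact mul_pos (by linarith [logistic_lt_one (η 0 0)]) (mul_pos (logistic_pos _)
      (mul_pos (logistic_pos _) (by linarith [logistic_lt_one (η 1 1)])))
  have hPt1 : P {ω | Z ω = 1} = ENNReal.ofReal x := by
    rw [hE1, key', hprob1, hprob0, hprob0, hprob1, hxdef,
      ENNReal.ofReal_mul (le_of_lt (logistic_pos _)),
      ENNReal.ofReal_mul (by linarith [logistic_lt_one (η 0 1)]),
      ENNReal.ofReal_mul (by linarith [logistic_lt_one (η 1 0)])]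
  have hPt2 : P {ω | Z ω = -1} = ENNReal.ofReal y := by
    rw [hE2, key', hprob0, hprob1, hprob1, hprob0, hydef,
      ENNReal.ofReal_mul (by linarith [logistic_lt_one (η 0 0)]),
      ENNReal.ofReal_mul (le_of_lt (logistic_pos _)),
      ENNReal.ofReal_mul (le_of_lt (logistic_pos _))]
  -- measurability
  have hm1 : MeasurableSet {ω | Z ω = 1} := by
    rw [hE1]
    exact ((hmeas 0 0) (measurableSet_singleton _)).inter
      (((hmeas 0 1) (measurableSet_singleton _)).inter
        (((hmeas 1 0) (measurableSet_singleton _)).inter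
          ((hmeas 1 1) (measurableSet_singleton _))))
  have hm2 : MeasurableSet {ω | Z ω = -1} := by
    rw [hE2]
    exact ((hmeas 0 0) (measurableSet_singleton _)).inter
      (((hmeas 0 1) (measurableSet_singleton _)).inter
        (((hmeas 1 0) (measurableSet_singleton _)).inter
          ((hmeas 1 1) (measurableSet_singleton _))))
  have hunion : {ω | Z ω = 1 ∨ Z ω = -1} = {ω | Z ω = 1} ∪ {ω | Z ω = -1} := rfl
  have hdisj : Disjoint {ω | Z ω = 1} {ω | Z ω = -1} := by
    rw [Set.disjoint_left]
    intro ω h1 h2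
    simp only [Set.mem_setOf_eq] at h1 h2
    rw [h1] at h2
    norm_num at h2
  have hmu : MeasurableSet {ω | Z ω = 1 ∨ Z ω = -1} := by
    rw [hunion]; exact hm1.union hm2
  have hPs : P {ω | Z ω = 1 ∨ Z ω = -1} = ENNReal.ofReal (x + y) := by
    rw [hunion, measure_union hdisj hm2, hPt1, hPt2, ENNReal.ofReal_add (le_of_lt hxpos) (le_of_lt hypos)]
  constructor
  · rw [hPs]
    exact ENNReal.ofReal_pos.mpr (by linarith)
  · have hst : {ω | Z ω = 1 ∨ Z ω = -1} ∩ {ω | Z ω = 1} = {ω | Z ω = 1} := by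
      ext ω; simp only [Set.mem_inter_iff, Set.mem_setOf_eq]; tauto
    rw [cond_apply hmu P, hst, hPs, hPt1,
      ← ENNReal.ofReal_inv_of_pos (by linarith : (0:ℝ) < x + y),
      ← ENNReal.ofReal_mul (by positivity)]
    congr 1
    rw [hxdef, hydef]
    rw [one_sub_logistic, one_sub_logistic, one_sub_logistic, one_sub_logistic]
    simp only [logistic]
    rw [Real.exp_sub, Real.exp_sub, Real.exp_add]
    have h2 := aux_ratio (Real.exp (η 0 0)) (Real.exp (η 0 1)) (Real.exp (η 1 0)) (Real.exp (η 1 1))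
      (Real.exp_pos _) (Real.exp_pos _) (Real.exp_pos _) (Real.exp_pos _)
    rw [h2]
    have hb := (Real.exp_pos (η 0 1)).ne'
    have hc := (Real.exp_pos (η 1 0)).ne'
    have hd1 : (0:ℝ) < 1 + Real.exp (η 0 0) * Real.exp (η 1 1) / (Real.exp (η 0 1) * Real.exp (η 1 0)) := by
      positivity
    have hd2 : (0:ℝ) < 1 + Real.exp (η 0 0) * Real.exp (η 1 1) / Real.exp (η 0 1) / Real.exp (η 1 0) := by
      positivity
    rw [div_eq_div_iff (ne_of_gt hd1) (ne_of_gt hd2)]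
    field_simp
end

section
/- (Necessity of a common cutoff in the model with category-specific sender and receiver effects.) Let M ≥ 1 and m₁₁, m₁₂, m₂₁, m₂₂ ∈ {1,…,M}. The difference-in-differences of fixed effects Δλ = ((λ₁(m₁₁) + δ₁(m₁₁)) − (λ₁(m₁₂) + δ₂(m₁₂))) − ((λ₂(m₂₁) + δ₁(m₂₁)) − (λ₂(m₂₂) + δ₂(m₂₂))) equals zero for ALL functions λ₁, λ₂, δ₁, δ₂ : {1,…,M} → ℝ if and only if m₁₁ = m₁₂ = m₂₁ = m₂₂. -/
/-- Necessity of a common cutoff in the model with category-specific sender and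
receiver effects: the difference-in-differences of fixed effects vanishes for
all sender threshold functions `lam 0, lam 1` and receiver threshold functions
`δ 0, δ 1` if and only if all four cutoffs coincide. -/
theorem common_cutoff_necessity (M : ℕ) (hM : 1 ≤ M) (m : Fin 2 → Fin 2 → Fin M) :
    (∀ lam δ : Fin 2 → Fin M → ℝ,
        ((lam 0 (m 0 0) + δ 0 (m 0 0)) - (lam 0 (m 0 1) + δ 1 (m 0 1)))
          - ((lam 1 (m 1 0) + δ 0 (m 1 0)) - (lam 1 (m 1 1) + δ 1 (m 1 1))) = 0)
      ↔ (m 0 0 = m 0 1 ∧ m 0 1 = m 1 0 ∧ m 1 0 = m 1 1) := by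
  constructor
  · intro h
    have h1 := h (fun i x => if i = 0 ∧ x = m 0 0 then (1:ℝ) else 0) (fun _ _ => 0)
    have h2 := h (fun i x => if i = 1 ∧ x = m 1 0 then (1:ℝ) else 0) (fun _ _ => 0)
    have h3 := h (fun _ _ => 0) (fun i x => if i = 0 ∧ x = m 0 0 then (1:ℝ) else 0)
    simp only [Fin.isValue] at h1 h2 h3
    have e1 : m 0 0 = m 0 1 := by
      by_contra hne
      simp [hne, Ne.symm hne] at h1
    have e3 : m 1 0 = m 1 1 := by
      by_contra hne
      simp [hne, Ne.symm hne] at h2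
    have e2 : m 0 0 = m 1 0 := by
      by_contra hne
      simp [hne, Ne.symm hne] at h3
    exact ⟨e1, e1 ▸ e2, e3⟩
  · rintro ⟨h1, h2, h3⟩ lam δ
    rw [h1, h2, h3]
    ring
end

section
/- Let N ≥ 4, let Σ be the set of 4-tuples of pairwise distinct elements of {1,…,N}, and let (X_σ)_{σ ∈ Σ} be square-integrable real random variables on a common probability space with E[X_σ] = 0 for all σ, such that X_σ and X_{σ'} are independent whenever σ and σ' have no element in common. Then E[(Σ_{σ ∈ Σ} X_σ)²] ≤ 16·N³·Σ_{σ ∈ Σ} E[X_σ²]. -/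
open MeasureTheory ProbabilityTheory
open scoped Classical

lemma card_overlap_le (N : ℕ) (σ : Fin 4 → Fin N) :
    (Finset.univ.filter (fun σ' : Fin 4 → Fin N => ∃ a b : Fin 4, σ a = σ' b)).card
      ≤ 16 * N ^ 3 := by
  have h := Finset.card_le_card_of_injOn
    (f := fun σ' : Fin 4 → Fin N =>
      if h : ∃ a b : Fin 4, σ a = σ' b then
        (h.choose, h.choose_spec.choose, σ' ∘ (h.choose_spec.choose).succAbove)
      else ((0 : Fin 4), (0 : Fin 4), fun _ => σ' 0))
    (s := Finset.univ.filter (fun σ' : Fin 4 → Fin N => ∃ a b : Fin 4, σ a = σ' b))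
    (t := (Finset.univ : Finset (Fin 4 × Fin 4 × (Fin 3 → Fin N))))
    (fun _ _ => Finset.mem_univ _)
    (by
      intro f hf g hg hfg
      have hf' : ∃ a b : Fin 4, σ a = f b := by simpa using hf
      have hg' : ∃ a b : Fin 4, σ a = g b := by simpa using hg
      simp only [dif_pos hf', dif_pos hg', Prod.mk.injEq] at hfg
      obtain ⟨h1, h2, h3⟩ := hfg
      have hfb : σ hf'.choose = f hf'.choose_spec.choose := hf'.choose_spec.choose_spec
      have hgb : σ hg'.choose = g hg'.choose_spec.choose := hg'.choose_spec.choose_spec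
      set b := hf'.choose_spec.choose with hbdef
      have hfg0 : f b = g b := by
        rw [← hfb, h1, hgb, h2]
      funext i
      rcases eq_or_ne i b with rfl | hib
      · exact hfg0
      · obtain ⟨j, hj⟩ := Fin.exists_succAbove_eq (Ne.symm hib).symm
        rw [← h2] at h3
        have := congrFun h3 j
        simpa [hj] using this)
  calc _ ≤ _ := h
    _ = 16 * N ^ 3 := by
        simp [Fintype.card_fun, Finset.card_univ]
        ring

/-- Second-moment bound for sums of centered tetrad-level statistics that are
independent across node-disjoint tetrads: the second moment of the sum is at
most `16 N³` times the sum of the individual second moments. -/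
theorem tetrad_sum_second_moment_bound
    {Ω : Type*} [MeasurableSpace Ω] (P : Measure Ω) [IsProbabilityMeasure P]
    (N : ℕ) (hN : 4 ≤ N)
    (X : (Fin 4 → Fin N) → Ω → ℝ)
    (hmeas : ∀ σ, Measurable (X σ))
    (hL2 : ∀ σ, MemLp (X σ) 2 P)
    (hmean : ∀ σ, ∫ ω, X σ ω ∂P = 0)
    (hindep : ∀ σ σ' : Fin 4 → Fin N,
      (∀ a b : Fin 4, σ a ≠ σ' b) → IndepFun (X σ) (X σ') P) :
    ∫ ω, (∑ σ ∈ Finset.univ.filter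
        (fun σ : Fin 4 → Fin N => Function.Injective σ), X σ ω) ^ 2 ∂P
      ≤ 16 * (N : ℝ) ^ 3 * ∑ σ ∈ Finset.univ.filter
          (fun σ : Fin 4 → Fin N => Function.Injective σ), ∫ ω, (X σ ω) ^ 2 ∂P := by
  set S := Finset.univ.filter (fun σ : Fin 4 → Fin N => Function.Injective σ) with hS
  set v : (Fin 4 → Fin N) → ℝ := fun σ => ∫ ω, (X σ ω) ^ 2 ∂P with hv
  have hvnonneg : ∀ σ, 0 ≤ v σ := fun σ => integral_nonneg (fun ω => sq_nonneg _)
  -- integrability of products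
  have hsq : ∀ σ : Fin 4 → Fin N, Integrable (fun ω => (X σ ω) ^ 2) P :=
    fun σ => (hL2 σ).integrable_sq
  have hInt : ∀ σ σ' : Fin 4 → Fin N,
      Integrable (fun ω => X σ ω * X σ' ω) P := by
    intro σ σ'
    refine Integrable.mono' (((hsq σ).add (hsq σ')).div_const 2)
      ((hmeas σ).mul (hmeas σ')).aestronglyMeasurable
      (Filter.Eventually.of_forall fun ω => ?_)
    have := sq_nonneg (|X σ ω| - |X σ' ω|)
    have h2 : |X σ ω * X σ' ω| = |X σ ω| * |X σ' ω| := abs_mul _ _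
    simp only [Pi.add_apply]
    rw [Real.norm_eq_abs, h2]
    nlinarith [sq_abs (X σ ω), sq_abs (X σ' ω)]
  -- expand the square of the sum
  have expand : ∫ ω, (∑ σ ∈ S, X σ ω) ^ 2 ∂P
      = ∑ σ ∈ S, ∑ σ' ∈ S, ∫ ω, X σ ω * X σ' ω ∂P := by
    have hpt : ∀ ω, (∑ σ ∈ S, X σ ω) ^ 2 = ∑ σ ∈ S, ∑ σ' ∈ S, X σ ω * X σ' ω := by
      intro ω; rw [sq, Finset.sum_mul_sum]
    simp_rw [hpt]
    rw [integral_finset_sum _ (fun σ _ => integrable_finset_sum _ (fun σ' _ => hInt σ σ'))]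
    exact Finset.sum_congr rfl fun σ _ =>
      integral_finset_sum _ fun σ' _ => hInt σ σ'
  -- termwise bound
  have key : ∀ σ σ' : Fin 4 → Fin N,
      ∫ ω, X σ ω * X σ' ω ∂P
        ≤ if ∃ a b : Fin 4, σ a = σ' b then (v σ + v σ') / 2 else 0 := by
    intro σ σ'
    by_cases h : ∃ a b : Fin 4, σ a = σ' b
    · rw [if_pos h]
      have hle : ∀ ω, X σ ω * X σ' ω ≤ ((X σ ω) ^ 2 + (X σ' ω) ^ 2) / 2 := by
        intro ω; nlinarith [sq_nonneg (X σ ω - X σ' ω)]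
      calc ∫ ω, X σ ω * X σ' ω ∂P
          ≤ ∫ ω, ((X σ ω) ^ 2 + (X σ' ω) ^ 2) / 2 ∂P :=
            integral_mono (hInt σ σ') (((hsq σ).add (hsq σ')).div_const 2) hle
        _ = (v σ + v σ') / 2 := by
            rw [integral_div, integral_add (hsq σ) (hsq σ')]
    · rw [if_neg h]
      push_neg at h
      have h0 : ∫ ω, X σ ω * X σ' ω ∂P = 0 := by
        calc ∫ ω, X σ ω * X σ' ω ∂P = ∫ ω, (X σ * X σ') ω ∂P := rfl
          _ = (∫ ω, X σ ω ∂P) * ∫ ω, X σ' ω ∂P :=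
              (hindep σ σ' h).integral_mul_eq_mul_integral (hL2 σ).aestronglyMeasurable
                (hL2 σ').aestronglyMeasurable
          _ = 0 := by rw [hmean σ, zero_mul]
      exact le_of_eq h0
  -- cardinality bound, real version
  have hcardR : ∀ σ : Fin 4 → Fin N,
      ((S.filter (fun σ' => ∃ a b : Fin 4, σ a = σ' b)).card : ℝ) ≤ 16 * (N : ℝ) ^ 3 := by
    intro σ
    have h1 : (S.filter (fun σ' => ∃ a b : Fin 4, σ a = σ' b)).card
        ≤ (Finset.univ.filter (fun σ' : Fin 4 → Fin N => ∃ a b : Fin 4, σ a = σ' b)).card := by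
      apply Finset.card_le_card
      intro x hx
      simp only [Finset.mem_filter, hS] at hx ⊢
      exact ⟨Finset.mem_univ _, hx.2⟩
    have := le_trans h1 (card_overlap_le N σ)
    exact_mod_cast this
  -- bound for sum of the "first" halves
  have boundA : ∑ σ ∈ S, ∑ σ' ∈ S, (if ∃ a b : Fin 4, σ a = σ' b then v σ / 2 else 0)
      ≤ 8 * (N : ℝ) ^ 3 * ∑ σ ∈ S, v σ := by
    have : ∀ σ ∈ S, ∑ σ' ∈ S, (if ∃ a b : Fin 4, σ a = σ' b then v σ / 2 else 0)
        ≤ 16 * (N : ℝ) ^ 3 * (v σ / 2) := by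
      intro σ _
      rw [← Finset.sum_filter, Finset.sum_const, nsmul_eq_mul]
      exact mul_le_mul_of_nonneg_right (hcardR σ) (by positivity)
    calc _ ≤ ∑ σ ∈ S, 16 * (N : ℝ) ^ 3 * (v σ / 2) := Finset.sum_le_sum this
      _ = 8 * (N : ℝ) ^ 3 * ∑ σ ∈ S, v σ := by
          rw [Finset.mul_sum]; exact Finset.sum_congr rfl fun σ _ => by ring
  -- bound for sum of the "second" halves, by symmetry
  have boundB : ∑ σ ∈ S, ∑ σ' ∈ S, (if ∃ a b : Fin 4, σ a = σ' b then v σ' / 2 else 0)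
      ≤ 8 * (N : ℝ) ^ 3 * ∑ σ ∈ S, v σ := by
    rw [Finset.sum_comm]
    have : ∀ σ' ∈ S, ∑ σ ∈ S, (if ∃ a b : Fin 4, σ a = σ' b then v σ' / 2 else 0)
        ≤ 16 * (N : ℝ) ^ 3 * (v σ' / 2) := by
      intro σ' _
      rw [← Finset.sum_filter, Finset.sum_const, nsmul_eq_mul]
      have hsymm : S.filter (fun σ => ∃ a b : Fin 4, σ a = σ' b)
          = S.filter (fun σ => ∃ a b : Fin 4, σ' a = σ b) := by
        apply Finset.filter_congr
        intro σ _
        constructor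
        · rintro ⟨a, b, hab⟩; exact ⟨b, a, hab.symm⟩
        · rintro ⟨a, b, hab⟩; exact ⟨b, a, hab.symm⟩
      rw [hsymm]
      exact mul_le_mul_of_nonneg_right (hcardR σ') (by positivity)
    calc _ ≤ ∑ σ' ∈ S, 16 * (N : ℝ) ^ 3 * (v σ' / 2) := Finset.sum_le_sum this
      _ = 8 * (N : ℝ) ^ 3 * ∑ σ ∈ S, v σ := by
          rw [Finset.mul_sum]; exact Finset.sum_congr rfl fun σ _ => by ring
  calc ∫ ω, (∑ σ ∈ S, X σ ω) ^ 2 ∂P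
      = ∑ σ ∈ S, ∑ σ' ∈ S, ∫ ω, X σ ω * X σ' ω ∂P := expand
    _ ≤ ∑ σ ∈ S, ∑ σ' ∈ S, (if ∃ a b : Fin 4, σ a = σ' b then (v σ + v σ') / 2 else 0) :=
        Finset.sum_le_sum fun σ _ => Finset.sum_le_sum fun σ' _ => key σ σ'
    _ = (∑ σ ∈ S, ∑ σ' ∈ S, (if ∃ a b : Fin 4, σ a = σ' b then v σ / 2 else 0))
        + ∑ σ ∈ S, ∑ σ' ∈ S, (if ∃ a b : Fin 4, σ a = σ' b then v σ' / 2 else 0) := by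
        rw [← Finset.sum_add_distrib]
        refine Finset.sum_congr rfl fun σ _ => ?_
        rw [← Finset.sum_add_distrib]
        refine Finset.sum_congr rfl fun σ' _ => ?_
        split <;> ring
    _ ≤ 8 * (N : ℝ) ^ 3 * (∑ σ ∈ S, v σ) + 8 * (N : ℝ) ^ 3 * (∑ σ ∈ S, v σ) :=
        add_le_add boundA boundB
    _ = 16 * (N : ℝ) ^ 3 * ∑ σ ∈ S, v σ := by ring
end

section
/- Let N ≥ 4 and M ≥ 1, let Σ be the set of 4-tuples of pairwise distinct elements of {1,…,N}, and let (X_{σ,m})_{σ ∈ Σ, m ∈ {1,…,M}} be square-integrable real random variables on a common probability space with E[X_{σ,m}] = 0 for all (σ, m), such that X_{σ,m} and X_{σ',m'} are independent for all m, m' whenever σ and σ' have no element in common. Then E[(Σ_{m=1}^{M} Σ_{σ ∈ Σ} X_{σ,m})²] ≤ 16·M·N³·Σ_{m=1}^{M} Σ_{σ ∈ Σ} E[X_{σ,m}²]. -/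
open MeasureTheory ProbabilityTheory
open scoped Classical

private lemma aux_l2_mul_integrable {Ω : Type*} [MeasurableSpace Ω] (P : Measure Ω)
    (f g : Ω → ℝ) (hf : MemLp f 2 P) (hg : MemLp g 2 P) :
    Integrable (fun ω => f ω * g ω) P := by
  have h1 : Integrable (fun ω => (f ω ^ 2 + g ω ^ 2) / 2) P :=
    (hf.integrable_sq.add hg.integrable_sq).div_const 2
  refine Integrable.mono' h1 (hf.aestronglyMeasurable.mul hg.aestronglyMeasurable) ?_
  filter_upwards with ω
  rw [Real.norm_eq_abs, abs_mul]
  nlinarith [two_mul_le_add_sq (|f ω|) (|g ω|), sq_abs (f ω), sq_abs (g ω),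
    abs_nonneg (f ω), abs_nonneg (g ω)]

private lemma aux_card_fix (N : ℕ) (b : Fin 4) (v : Fin N) :
    (Finset.univ.filter (fun f : Fin 4 → Fin N => f b = v)).card ≤ N ^ 3 := by
  have hcard : Fintype.card ({j : Fin 4 // j ≠ b} → Fin N) = N ^ 3 := by
    rw [Fintype.card_fun, Fintype.card_fin]
    congr 1
    rw [Fintype.card_subtype]
    simp [Finset.filter_ne']
  calc (Finset.univ.filter (fun f : Fin 4 → Fin N => f b = v)).card
      ≤ (Finset.univ : Finset ({j : Fin 4 // j ≠ b} → Fin N)).card := by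
        apply Finset.card_le_card_of_injOn (fun f j => f j.1)
        · intro f _; exact Finset.mem_univ _
        · intro f hf g hg h
          simp only [Finset.coe_filter, Set.mem_setOf_eq, Finset.mem_univ, true_and] at hf hg
          funext i
          by_cases hi : i = b
          · rw [hi, hf, hg]
          · exact congrFun h ⟨i, hi⟩
    _ = N ^ 3 := by rw [Finset.card_univ, hcard]

private lemma aux_card_overlap (N : ℕ) (σ : Fin 4 → Fin N) :
    (Finset.univ.filter (fun f : Fin 4 → Fin N => ∃ a b, σ a = f b)).card ≤ 16 * N ^ 3 := by
  have hsub : Finset.univ.filter (fun f : Fin 4 → Fin N => ∃ a b, σ a = f b)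
      ⊆ (Finset.univ : Finset (Fin 4 × Fin 4)).biUnion
        (fun ab => Finset.univ.filter (fun f => f ab.2 = σ ab.1)) := by
    intro f hf
    simp only [Finset.mem_filter, Finset.mem_univ, true_and] at hf
    obtain ⟨a, b, hab⟩ := hf
    exact Finset.mem_biUnion.2 ⟨(a, b), Finset.mem_univ _, by simp [hab.symm]⟩
  calc _ ≤ _ := Finset.card_le_card hsub
    _ ≤ ∑ ab : Fin 4 × Fin 4,
        (Finset.univ.filter (fun f : Fin 4 → Fin N => f ab.2 = σ ab.1)).card :=
        Finset.card_biUnion_le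
    _ ≤ ∑ _ab : Fin 4 × Fin 4, N ^ 3 :=
        Finset.sum_le_sum (fun ab _ => aux_card_fix N ab.2 (σ ab.1))
    _ = 16 * N ^ 3 := by simp [Finset.sum_const]

/-- Pooled second-moment bound used for the pooled tetrad logit estimator:
for centered tetrad–cutoff statistics that are independent (across all cutoff
pairs) whenever the tetrads are node-disjoint, the second moment of the pooled
sum is at most `16 M N³` times the sum of individual second moments. -/
theorem pooled_tetrad_sum_second_moment_bound
    {Ω : Type*} [MeasurableSpace Ω] (P : Measure Ω) [IsProbabilityMeasure P]
    (N M : ℕ) (hN : 4 ≤ N) (hM : 1 ≤ M)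
    (X : (Fin 4 → Fin N) → Fin M → Ω → ℝ)
    (hmeas : ∀ σ m, Measurable (X σ m))
    (hL2 : ∀ σ m, MemLp (X σ m) 2 P)
    (hmean : ∀ σ m, ∫ ω, X σ m ω ∂P = 0)
    (hindep : ∀ (σ σ' : Fin 4 → Fin N) (m m' : Fin M),
      (∀ a b : Fin 4, σ a ≠ σ' b) → IndepFun (X σ m) (X σ' m') P) :
    ∫ ω, (∑ m : Fin M, ∑ σ ∈ Finset.univ.filter
        (fun σ : Fin 4 → Fin N => Function.Injective σ), X σ m ω) ^ 2 ∂P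
      ≤ 16 * (M : ℝ) * (N : ℝ) ^ 3 *
          ∑ m : Fin M, ∑ σ ∈ Finset.univ.filter
            (fun σ : Fin 4 → Fin N => Function.Injective σ),
              ∫ ω, (X σ m ω) ^ 2 ∂P := by
  classical
  set S : Finset (Fin 4 → Fin N) :=
    Finset.univ.filter (fun σ : Fin 4 → Fin N => Function.Injective σ) with hS
  set T : Finset (Fin M × (Fin 4 → Fin N)) := Finset.univ ×ˢ S with hT
  set Y : Fin M × (Fin 4 → Fin N) → Ω → ℝ := fun p ω => X p.2 p.1 ω with hYdef
  have hsum : ∀ ω, (∑ m : Fin M, ∑ σ ∈ S, X σ m ω) = ∑ p ∈ T, Y p ω := by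
    intro ω; rw [hT, Finset.sum_product]
  set E : Fin M × (Fin 4 → Fin N) → ℝ := fun p => ∫ ω, (Y p ω) ^ 2 ∂P with hEdef
  have hEnonneg : ∀ p, 0 ≤ E p := fun p =>
    integral_nonneg (fun ω => sq_nonneg _)
  have hInt : ∀ p q : Fin M × (Fin 4 → Fin N),
      Integrable (fun ω => Y p ω * Y q ω) P :=
    fun p q => aux_l2_mul_integrable P _ _ (hL2 p.2 p.1) (hL2 q.2 q.1)
  -- expand the square of the sum
  have hexpand : ∫ ω, (∑ m : Fin M, ∑ σ ∈ S, X σ m ω) ^ 2 ∂P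
      = ∑ p ∈ T, ∑ q ∈ T, ∫ ω, Y p ω * Y q ω ∂P := by
    have h1 : (fun ω => (∑ m : Fin M, ∑ σ ∈ S, X σ m ω) ^ 2)
        = fun ω => ∑ p ∈ T, ∑ q ∈ T, Y p ω * Y q ω := by
      funext ω
      rw [hsum ω, sq, Finset.sum_mul_sum]
    rw [h1, integral_finset_sum T (fun p _ => integrable_finset_sum T (fun q _ => hInt p q))]
    exact Finset.sum_congr rfl (fun p _ =>
      integral_finset_sum T (fun q _ => hInt p q))
  -- per-pair bound
  have hpair : ∀ p q : Fin M × (Fin 4 → Fin N),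
      ∫ ω, Y p ω * Y q ω ∂P
        ≤ if (∃ a b, p.2 a = q.2 b) then (E p + E q) / 2 else 0 := by
    intro p q
    by_cases hov : ∃ a b, p.2 a = q.2 b
    · rw [if_pos hov]
      have hmono : ∫ ω, Y p ω * Y q ω ∂P
          ≤ ∫ ω, (Y p ω ^ 2 + Y q ω ^ 2) / 2 ∂P := by
        refine integral_mono (hInt p q)
          (((hL2 p.2 p.1).integrable_sq.add (hL2 q.2 q.1).integrable_sq).div_const 2) ?_
        intro ω
        nlinarith [sq_nonneg (Y p ω - Y q ω)]
      calc ∫ ω, Y p ω * Y q ω ∂P ≤ ∫ ω, (Y p ω ^ 2 + Y q ω ^ 2) / 2 ∂P := hmono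
        _ = (E p + E q) / 2 := by
            rw [integral_div, integral_add (hL2 p.2 p.1).integrable_sq
              (hL2 q.2 q.1).integrable_sq]
    · rw [if_neg hov]
      push_neg at hov
      have hind : IndepFun (X p.2 p.1) (X q.2 q.1) P :=
        hindep p.2 q.2 p.1 q.1 hov
      have : ∫ ω, Y p ω * Y q ω ∂P
          = (∫ ω, X p.2 p.1 ω ∂P) * ∫ ω, X q.2 q.1 ω ∂P :=
        hind.integral_mul_eq_mul_integral (hmeas p.2 p.1).aestronglyMeasurable
          (hmeas q.2 q.1).aestronglyMeasurable
      rw [this, hmean, zero_mul]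
  -- symmetry rewriting of the bound
  have hovsymm : ∀ p q : Fin M × (Fin 4 → Fin N),
      (∃ a b, p.2 a = q.2 b) ↔ (∃ a b, q.2 a = p.2 b) := by
    intro p q
    constructor <;> (rintro ⟨a, b, h⟩; exact ⟨b, a, h.symm⟩)
  have hsumB : ∑ p ∈ T, ∑ q ∈ T,
      (if (∃ a b, p.2 a = q.2 b) then (E p + E q) / 2 else 0)
      = ∑ p ∈ T, ∑ q ∈ T, (if (∃ a b, p.2 a = q.2 b) then E p else 0) := by
    have h1 : ∀ p q : Fin M × (Fin 4 → Fin N),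
        (if (∃ a b, p.2 a = q.2 b) then (E p + E q) / 2 else 0)
        = ((if (∃ a b, p.2 a = q.2 b) then E p else 0)
          + (if (∃ a b, q.2 a = p.2 b) then E q else 0)) / 2 := by
      intro p q
      by_cases h : ∃ a b, p.2 a = q.2 b
      · rw [if_pos h, if_pos h, if_pos ((hovsymm p q).1 h)]
      · rw [if_neg h, if_neg h, if_neg (fun hc => h ((hovsymm p q).2 hc)), add_zero,
          zero_div]
    have h3 : ∑ p ∈ T, ∑ q ∈ T, (if (∃ a b, p.2 a = q.2 b) then (E p + E q) / 2 else 0)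
        = (∑ p ∈ T, ∑ q ∈ T, ((if (∃ a b, p.2 a = q.2 b) then E p else 0)
            + (if (∃ a b, q.2 a = p.2 b) then E q else 0))) / 2 := by
      rw [Finset.sum_div]
      refine Finset.sum_congr rfl fun p _ => ?_
      rw [Finset.sum_div]
      exact Finset.sum_congr rfl fun q _ => h1 p q
    rw [h3]
    simp only [Finset.sum_add_distrib]
    have h2 : ∑ p ∈ T, ∑ q ∈ T, (if (∃ a b, q.2 a = p.2 b) then E q else 0)
        = ∑ p ∈ T, ∑ q ∈ T, (if (∃ a b, p.2 a = q.2 b) then E p else 0) :=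
      Finset.sum_comm
    rw [h2]
    ring
  -- the inner sum of the symmetric bound
  have hcard : ∀ p : Fin M × (Fin 4 → Fin N),
      (T.filter (fun q => ∃ a b, p.2 a = q.2 b)).card ≤ 16 * M * N ^ 3 := by
    intro p
    have hsub : T.filter (fun q => ∃ a b, p.2 a = q.2 b)
        ⊆ Finset.univ ×ˢ (Finset.univ.filter (fun f : Fin 4 → Fin N => ∃ a b, p.2 a = f b)) := by
      intro q hq
      rw [Finset.mem_filter] at hq
      exact Finset.mem_product.2 ⟨Finset.mem_univ _,
        Finset.mem_filter.2 ⟨Finset.mem_univ _, hq.2⟩⟩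
    calc (T.filter (fun q => ∃ a b, p.2 a = q.2 b)).card
        ≤ (Finset.univ ×ˢ (Finset.univ.filter
            (fun f : Fin 4 → Fin N => ∃ a b, p.2 a = f b))).card :=
          Finset.card_le_card hsub
      _ = M * (Finset.univ.filter (fun f : Fin 4 → Fin N => ∃ a b, p.2 a = f b)).card := by
          rw [Finset.card_product, Finset.card_univ, Fintype.card_fin]
      _ ≤ M * (16 * N ^ 3) :=
          Nat.mul_le_mul_left M (aux_card_overlap N p.2)
      _ = 16 * M * N ^ 3 := by ring
  have hinner : ∀ p : Fin M × (Fin 4 → Fin N),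
      ∑ q ∈ T, (if (∃ a b, p.2 a = q.2 b) then E p else 0)
        ≤ (16 * (M : ℝ) * (N : ℝ) ^ 3) * E p := by
    intro p
    rw [← Finset.sum_filter, Finset.sum_const, nsmul_eq_mul]
    have hc : ((T.filter (fun q => ∃ a b, p.2 a = q.2 b)).card : ℝ)
        ≤ 16 * (M : ℝ) * (N : ℝ) ^ 3 := by
      have := hcard p
      calc ((T.filter (fun q => ∃ a b, p.2 a = q.2 b)).card : ℝ)
          ≤ ((16 * M * N ^ 3 : ℕ) : ℝ) := Nat.cast_le.2 this
        _ = 16 * (M : ℝ) * (N : ℝ) ^ 3 := by push_cast; ring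
    exact mul_le_mul_of_nonneg_right hc (hEnonneg p)
  -- put everything together
  have hRHS : (∑ m : Fin M, ∑ σ ∈ S, ∫ ω, (X σ m ω) ^ 2 ∂P) = ∑ p ∈ T, E p := by
    rw [hT, Finset.sum_product]
  calc ∫ ω, (∑ m : Fin M, ∑ σ ∈ S, X σ m ω) ^ 2 ∂P
      = ∑ p ∈ T, ∑ q ∈ T, ∫ ω, Y p ω * Y q ω ∂P := hexpand
    _ ≤ ∑ p ∈ T, ∑ q ∈ T, (if (∃ a b, p.2 a = q.2 b) then (E p + E q) / 2 else 0) :=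
        Finset.sum_le_sum (fun p _ => Finset.sum_le_sum (fun q _ => hpair p q))
    _ = ∑ p ∈ T, ∑ q ∈ T, (if (∃ a b, p.2 a = q.2 b) then E p else 0) := hsumB
    _ ≤ ∑ p ∈ T, (16 * (M : ℝ) * (N : ℝ) ^ 3) * E p :=
        Finset.sum_le_sum (fun p _ => hinner p)
    _ = 16 * (M : ℝ) * (N : ℝ) ^ 3 * ∑ p ∈ T, E p := by
        rw [← Finset.mul_sum]
    _ = 16 * (M : ℝ) * (N : ℝ) ^ 3 *
          ∑ m : Fin M, ∑ σ ∈ S, ∫ ω, (X σ m ω) ^ 2 ∂P := by rw [hRHS]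
end
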